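/- For any real x ≥ 2 and any positive reals a₁, a₂, a₃, a₄ such that a₃·x ≤ a₁·√x·log(a₂·x) + a₄·log(a₂·x), it holds that x ≤ (4a₄/a₃)·log(2a₄a₂/a₃) + (128a₁²/(9a₃²))·(log(4a₁√a₂·e/a₃))². -/

import Mathlib

theorem logdiv_aux (v w : ℝ) (hv : 0 < v) (hw : 0 < w) :
    Real.log v - Real.log w ≤ v / (w * Real.exp 1) := by
  have hE : (0:ℝ) < Real.exp 1 := Real.exp_pos 1
  have h1 : Real.log (v / (w * Real.exp 1)) ≤ v / (w * Real.exp 1) - 1 :=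
    Real.log_le_sub_one_of_pos (by positivity)
  rw [Real.log_div hv.ne' (by positivity), Real.log_mul hw.ne' (Real.exp_ne_zero 1),
    Real.log_exp] at h1
  linarith

set_option maxHeartbeats 1000000 in
/-- Inversion of a Bernstein-type self-bounding inequality. -/
theorem log_sqrt_inversion
    (x a₁ a₂ a₃ a₄ : ℝ) (hx : 2 ≤ x)
    (h₁ : 0 < a₁) (h₂ : 0 < a₂) (h₃ : 0 < a₃) (h₄ : 0 < a₄)
    (h : a₃ * x ≤ a₁ * Real.sqrt x * Real.log (a₂ * x) + a₄ * Real.log (a₂ * x)) :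
    x ≤ 4 * a₄ / a₃ * Real.log (2 * a₄ * a₂ / a₃)
      + 128 * a₁ ^ 2 / (9 * a₃ ^ 2)
        * (Real.log (4 * a₁ * Real.sqrt a₂ * Real.exp 1 / a₃)) ^ 2 := by
  have hE : (0:ℝ) < Real.exp 1 := Real.exp_pos 1
  have he1 : (2.7:ℝ) < Real.exp 1 := by
    have := Real.exp_one_gt_d9; norm_num at this ⊢; linarith
  have he2 : Real.exp 1 < 2.72 := by
    have := Real.exp_one_lt_d9; norm_num at this ⊢; linarith
  have hx0 : (0:ℝ) < x := by linarith
  set y := Real.sqrt x with hydef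
  have hy : 0 < y := Real.sqrt_pos.2 hx0
  have hy2 : y ^ 2 = x := Real.sq_sqrt hx0.le
  set Λ := Real.log (a₂ * x) with hΛdef
  set M := Real.log (4 * a₁ * Real.sqrt a₂ * Real.exp 1 / a₃) with hMdef
  set Λ₀ := Real.log (2 * a₄ * a₂ / a₃) with hΛ₀def
  clear_value y Λ M Λ₀
  have hs2 : 0 < Real.sqrt a₂ := Real.sqrt_pos.2 h₂
  have hs2x : Real.sqrt a₂ ^ 2 = a₂ := Real.sq_sqrt h₂.le
  -- Λ = 2 log(√a₂ y)
  have hΛ2 : Λ = 2 * Real.log (Real.sqrt a₂ * y) := by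
    rw [hΛdef, show a₂ * x = (Real.sqrt a₂ * y) ^ 2 by rw [mul_pow, hs2x, hy2]]
    rw [Real.log_pow]
    norm_num
  -- positivity of Λ
  have hΛpos : 0 < Λ := by
    by_contra hc
    push_neg at hc
    have t1 : a₁ * y * Λ ≤ 0 := mul_nonpos_of_nonneg_of_nonpos (by positivity) hc
    have t2 : a₄ * Λ ≤ 0 := mul_nonpos_of_nonneg_of_nonpos h₄.le hc
    have t3 : 0 < a₃ * x := mul_pos h₃ hx0
    linarith only [h, t1, t2, t3]
  -- Step A : Λ * (2 a₁ e² y) ≤ M * (4 a₁ e² y) + a₃ x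
  have hA : Λ * (2 * a₁ * Real.exp 1 ^ 2 * y)
      ≤ M * (4 * a₁ * Real.exp 1 ^ 2 * y) + a₃ * x := by
    have h2 := logdiv_aux (Real.sqrt a₂ * y) (4 * a₁ * Real.sqrt a₂ * Real.exp 1 / a₃)
      (by positivity) (by positivity)
    rw [← hMdef] at h2
    have e : (Real.sqrt a₂ * y) / ((4 * a₁ * Real.sqrt a₂ * Real.exp 1 / a₃) * Real.exp 1)
        = a₃ * y / (4 * a₁ * Real.exp 1 ^ 2) := by
      rw [div_eq_div_iff (by positivity) (by positivity)]
      field_simp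
    rw [e] at h2
    have h4 : (Real.log (Real.sqrt a₂ * y) - M) * (4 * a₁ * Real.exp 1 ^ 2) ≤ a₃ * y :=
      (le_div_iff₀ (by positivity)).mp h2
    have h4y := mul_le_mul_of_nonneg_right h4 hy.le
    rw [hΛ2, ← hy2]
    linarith only [h4y]
  -- Step B : Λ * (2 a₄ e) ≤ Λ₀ * (2 a₄ e) + a₃ x
  have hB : Λ * (2 * a₄ * Real.exp 1) ≤ Λ₀ * (2 * a₄ * Real.exp 1) + a₃ * x := by
    have h2 := logdiv_aux (a₂ * x) (2 * a₄ * a₂ / a₃) (by positivity) (by positivity)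
    rw [← hΛdef, ← hΛ₀def] at h2
    have e : (a₂ * x) / ((2 * a₄ * a₂ / a₃) * Real.exp 1)
        = a₃ * x / (2 * a₄ * Real.exp 1) := by
      rw [div_eq_div_iff (by positivity) (by positivity)]
      field_simp
    rw [e] at h2
    have h4 : (Λ - Λ₀) * (2 * a₄ * Real.exp 1) ≤ a₃ * x :=
      (le_div_iff₀ (by positivity)).mp h2
    linarith only [h4]
  -- Combine with h
  have hh := mul_le_mul_of_nonneg_left h (show (0:ℝ) ≤ 2 * Real.exp 1 ^ 2 by positivity)
  have hBe := mul_le_mul_of_nonneg_left hB hE.le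
  have hkey2 : a₃ * x * (2 * Real.exp 1 ^ 2 - Real.exp 1 - 1)
      ≤ 4 * Real.exp 1 ^ 2 * a₁ * M * y + 2 * Real.exp 1 ^ 2 * a₄ * Λ₀ := by
    linarith only [hh, hA, hBe]
  set K := 2 * Real.exp 1 ^ 2 - Real.exp 1 - 1 with hKdef
  clear_value K
  have hE2lb : (7.29:ℝ) < Real.exp 1 ^ 2 := by nlinarith only [he1]
  have hE2ub : Real.exp 1 ^ 2 < 7.3984 := by nlinarith only [he1, he2]
  have hE4ub : Real.exp 1 ^ 4 < 54.74 := by nlinarith only [hE2lb, hE2ub]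
  have hE3ub : Real.exp 1 ^ 3 < 20.13 := by nlinarith only [hE2lb, hE2ub, he1, he2]
  have hKlb : (10.86:ℝ) ≤ K := by rw [hKdef]; linarith only [hE2lb, he2]
  have hKpos : 0 < K := by linarith only [hKlb]
  have hK1 : Real.exp 1 ^ 2 ≤ K := by rw [hKdef]; nlinarith only [he1]
  have hK2lb : (117.93:ℝ) ≤ K ^ 2 := by
    have h' : (10.86:ℝ) * 10.86 ≤ K * K :=
      mul_le_mul hKlb hKlb (by norm_num) (by linarith only [hKlb])
    calc (117.93:ℝ) ≤ 10.86 * 10.86 := by norm_num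
      _ ≤ K * K := h'
      _ = K ^ 2 := (sq K).symm
  have hK2 : 144 * Real.exp 1 ^ 4 ≤ 128 * K ^ 2 := by linarith only [hE4ub, hK2lb]
  -- reduce goal
  suffices hS : 9 * a₃ ^ 2 * x ≤ 36 * a₃ * a₄ * Λ₀ + 128 * a₁ ^ 2 * M ^ 2 by
    have h9 : (0:ℝ) < 9 * a₃ ^ 2 := by positivity
    rw [show 4 * a₄ / a₃ * Λ₀ + 128 * a₁ ^ 2 / (9 * a₃ ^ 2) * M ^ 2
        = (36 * a₃ * a₄ * Λ₀ + 128 * a₁ ^ 2 * M ^ 2) / (9 * a₃ ^ 2) by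
      field_simp; ring]
    rw [le_div_iff₀ h9]
    linarith only [hS]
  rcases le_or_gt 0 Λ₀ with hcase | hcase
  · -- good case
    have hk3 := mul_le_mul_of_nonneg_left hkey2 (show (0:ℝ) ≤ 2 * K * a₃ by positivity)
    have hsq := sq_nonneg (K * a₃ * y - 4 * Real.exp 1 ^ 2 * a₁ * M)
    have hyx : K ^ 2 * a₃ ^ 2 * y ^ 2 = K ^ 2 * a₃ ^ 2 * x := by rw [hy2]
    have hR : K ^ 2 * a₃ ^ 2 * x
        ≤ 16 * Real.exp 1 ^ 4 * a₁ ^ 2 * M ^ 2 + 4 * K * Real.exp 1 ^ 2 * a₃ * a₄ * Λ₀ := by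
      linarith only [hk3, hsq, hyx]
    have t1 : 0 ≤ (128 * K ^ 2 - 144 * Real.exp 1 ^ 4) * (a₁ ^ 2 * M ^ 2) :=
      mul_nonneg (by linarith only [hK2]) (by positivity)
    have t2 : 0 ≤ (36 * K * (K - Real.exp 1 ^ 2)) * (a₃ * a₄ * Λ₀) :=
      mul_nonneg (by nlinarith only [hKpos, hK1]) (mul_nonneg (mul_nonneg h₃.le h₄.le) hcase)
    have hfin : K ^ 2 * (9 * a₃ ^ 2 * x) ≤ K ^ 2 * (36 * a₃ * a₄ * Λ₀ + 128 * a₁ ^ 2 * M ^ 2) := by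
      linarith only [hR, t1, t2]
    exact le_of_mul_le_mul_left hfin (by positivity)
  · -- bad case : Λ₀ < 0
    have hneg : 2 * Real.exp 1 ^ 2 * a₄ * Λ₀ ≤ 0 :=
      mul_nonpos_of_nonneg_of_nonpos (by positivity) hcase.le
    have hkey3 : a₃ * x * K ≤ 4 * Real.exp 1 ^ 2 * a₁ * M * y := by
      linarith only [hkey2, hneg]
    have hQy : K * a₃ * y ≤ 4 * Real.exp 1 ^ 2 * a₁ * M := by
      have h' : (K * a₃ * y) * y ≤ (4 * Real.exp 1 ^ 2 * a₁ * M) * y := by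
        calc (K * a₃ * y) * y = a₃ * x * K := by rw [← hy2]; ring
          _ ≤ 4 * Real.exp 1 ^ 2 * a₁ * M * y := hkey3
          _ = (4 * Real.exp 1 ^ 2 * a₁ * M) * y := by ring
      exact le_of_mul_le_mul_right h' hy
    have hKy0 : 0 ≤ K * a₃ * y := mul_nonneg (mul_nonneg hKpos.le h₃.le) hy.le
    have hQ : (K * a₃ * y) ^ 2 ≤ (4 * Real.exp 1 ^ 2 * a₁ * M) ^ 2 :=
      pow_le_pow_left₀ hKy0 hQy 2
    have eqx : K ^ 2 * a₃ ^ 2 * x = (K * a₃ * y) ^ 2 := by rw [← hy2]; ring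
    have hQ' : K ^ 2 * a₃ ^ 2 * x ≤ 16 * Real.exp 1 ^ 4 * a₁ ^ 2 * M ^ 2 := by
      linarith only [hQ, eqx]
    -- -Λ₀ * (2 a₄ e) ≤ x a₃
    have hlog41 : Λ₀ + Real.log (x * a₃ / (2 * a₄)) = Λ := by
      rw [hΛ₀def, hΛdef, ← Real.log_mul (show ((2:ℝ) * a₄ * a₂ / a₃) ≠ 0 by positivity)
        (show (x * a₃ / (2 * a₄)) ≠ 0 by positivity)]
      congr 1
      field_simp
    have h6 : -Λ₀ ≤ Real.log (x * a₃ / (2 * a₄)) := by linarith only [hlog41, hΛpos]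
    have h7 := logdiv_aux (x * a₃ / (2 * a₄)) 1 (by positivity) one_pos
    rw [Real.log_one] at h7
    have h8 : -Λ₀ ≤ x * a₃ / (2 * a₄) / (1 * Real.exp 1) := by linarith only [h6, h7]
    rw [div_div] at h8
    have hB2 : -Λ₀ * (2 * a₄ * (1 * Real.exp 1)) ≤ x * a₃ := by
      have h9 := (le_div_iff₀ (by positivity : (0:ℝ) < 2 * a₄ * (1 * Real.exp 1))).mp h8
      linarith only [h9]
    have hE4 : 9 * Real.exp 1 ^ 4 + 18 * Real.exp 1 ^ 3 ≤ 8 * K ^ 2 := by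
      linarith only [hE4ub, hE3ub, hK2lb]
    have hB2m := mul_le_mul_of_nonneg_left hB2
      (show (0:ℝ) ≤ 18 * Real.exp 1 ^ 3 * a₃ by positivity)
    have hE4m := mul_le_mul_of_nonneg_right hE4 (show (0:ℝ) ≤ a₃ ^ 2 * x by positivity)
    have hfin : Real.exp 1 ^ 4 * (9 * a₃ ^ 2 * x)
        ≤ Real.exp 1 ^ 4 * (36 * a₃ * a₄ * Λ₀ + 128 * a₁ ^ 2 * M ^ 2) := by
      linarith only [hQ', hB2m, hE4m]
    exact le_of_mul_le_mul_left hfin (by positivity)
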